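/- arXiv:1409.2094 — 2 statements merged into one kernel-verified Lean document; each statement's English description precedes it below -/
import Mathlib

section
/- Let $\{F_0,\dots,F_\ell\}$ and $\{p_0,\dots,p_\ell\}$ be two sequences of nonnegative numbers such that $p_{j+1} \le p_j + C_0 \max\{F_j, F_{j+1}\}$ for $0\le j\le \ell-1$, and $F_{j+1} \le \tfrac12 F_j + \eta_j K + \eta_j \max\{p_0,\dots,p_{j-1}\} + \eta_j \max\{F_0,\dots,F_{j-1}\}$ for $1\le j\le \ell-1$, where $K\ge 0$, $0\le \eta_1\le \eta_2\le\cdots\le \eta_{\ell-1}=\eta_\ell$, and $\eta_1+\cdots+\eta_\ell\le C_1$. Then there exists a constant $C$, depending only on $C_0$ and $C_1$, such that for all $1\le j\le \ell$: $p_j \le C(K + p_0 + F_0 + F_1)$ and $F_j \le C(2^{-j} + \eta_j)(K + p_0 + F_0 + F_1)$. -/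
private lemma aux_telescope (b : ℝ) (η : ℕ → ℝ) (n : ℕ) :
    ∑ j ∈ Finset.Icc 1 n, b * η j * (∏ i ∈ Finset.Icc 1 (j - 1), (1 + b * η i))
      = ∏ i ∈ Finset.Icc 1 n, (1 + b * η i) - 1 := by
  induction n with
  | zero => simp
  | succ n ih =>
    rw [Finset.sum_Icc_succ_top (by omega), Finset.prod_Icc_succ_top (by omega), ih]
    simp only [Nat.add_sub_cancel]
    ring

private lemma aux_gronwall (a b M : ℝ) (hb : 0 ≤ b) (haM : 0 ≤ a * M) (ℓ : ℕ) (S η : ℕ → ℝ)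
    (hη : ∀ j, 1 ≤ j → j ≤ ℓ → 0 ≤ η j)
    (hS0 : S 0 ≤ a * M)
    (h : ∀ m, 1 ≤ m → m ≤ ℓ → S m ≤ a * M + b * ∑ j ∈ Finset.Icc 1 (m - 1), η j * S j) :
    ∀ m, m ≤ ℓ → S m ≤ a * M * ∏ i ∈ Finset.Icc 1 (m - 1), (1 + b * η i) := by
  intro m
  induction m using Nat.strong_induction_on with
  | _ m ih =>
    intro hm
    rcases Nat.eq_zero_or_pos m with h0 | h1
    · subst h0; simpa using hS0
    · have key := h m h1 hm
      have hsum : ∑ j ∈ Finset.Icc 1 (m - 1), η j * S j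
          ≤ ∑ j ∈ Finset.Icc 1 (m - 1), η j * (a * M * ∏ i ∈ Finset.Icc 1 (j - 1), (1 + b * η i)) := by
        apply Finset.sum_le_sum
        intro j hj
        have hj' := Finset.mem_Icc.mp hj
        exact mul_le_mul_of_nonneg_left (ih j (by omega) (by omega)) (hη j hj'.1 (by omega))
      have heq : b * ∑ j ∈ Finset.Icc 1 (m - 1), η j * (a * M * ∏ i ∈ Finset.Icc 1 (j - 1), (1 + b * η i))
          = a * M * ∑ j ∈ Finset.Icc 1 (m - 1), b * η j * ∏ i ∈ Finset.Icc 1 (j - 1), (1 + b * η i) := by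
        rw [Finset.mul_sum, Finset.mul_sum]
        exact Finset.sum_congr rfl fun j _ => by ring
      have htel := aux_telescope b η (m - 1)
      have h2 : b * ∑ j ∈ Finset.Icc 1 (m - 1), η j * S j
          ≤ a * M * (∏ i ∈ Finset.Icc 1 (m - 1), (1 + b * η i) - 1) := by
        calc b * ∑ j ∈ Finset.Icc 1 (m - 1), η j * S j
            ≤ b * ∑ j ∈ Finset.Icc 1 (m - 1), η j * (a * M * ∏ i ∈ Finset.Icc 1 (j - 1), (1 + b * η i)) :=
              mul_le_mul_of_nonneg_left hsum hb
          _ = a * M * ∑ j ∈ Finset.Icc 1 (m - 1), b * η j * ∏ i ∈ Finset.Icc 1 (j - 1), (1 + b * η i) := heq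
          _ = a * M * (∏ i ∈ Finset.Icc 1 (m - 1), (1 + b * η i) - 1) := by rw [htel]
      nlinarith [key, h2]

set_option maxHeartbeats 1000000 in
/-- Lemma 3.1 of Armstrong–Shen: discrete iteration lemma. -/
theorem stmt0 (C₀ C₁ : ℝ) (hC₀ : 0 < C₀) (hC₁ : 0 < C₁) (K : ℝ) (hK : 0 ≤ K)
    (ℓ : ℕ) (F p η : ℕ → ℝ)
    (hF : ∀ j ≤ ℓ, 0 ≤ F j) (hp : ∀ j ≤ ℓ, 0 ≤ p j)
    (hη1 : 0 ≤ η 1)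
    (hηmono : ∀ j, 1 ≤ j → j + 1 ≤ ℓ → η j ≤ η (j + 1))
    (hηtop : η (ℓ - 1) = η ℓ)
    (hηsum : ∑ j ∈ Finset.Icc 1 ℓ, η j ≤ C₁)
    (hrec1 : ∀ j, j + 1 ≤ ℓ → p (j + 1) ≤ p j + C₀ * max (F j) (F (j + 1)))
    (hrec2 : ∀ j, ∀ hj : 1 ≤ j, j + 1 ≤ ℓ →
      F (j + 1) ≤ (1 / 2) * F j + η j * K
        + η j * (Finset.range j).sup' (Finset.nonempty_range_iff.mpr (by omega)) p
        + η j * (Finset.range j).sup' (Finset.nonempty_range_iff.mpr (by omega)) F) :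
    ∃ C : ℝ, 0 < C ∧ ∀ j, 1 ≤ j → j ≤ ℓ →
      p j ≤ C * (K + p 0 + F 0 + F 1) ∧
      F j ≤ C * ((1 / 2 : ℝ) ^ j + η j) * (K + p 0 + F 0 + F 1) := by
  rcases Nat.eq_zero_or_pos ℓ with hℓ0 | hℓ
  · exact ⟨1, one_pos, fun j h1 h0 => absurd (h1.trans h0) (by omega)⟩
  set M := K + p 0 + F 0 + F 1 with hM_def
  clear_value M
  have hp0 := hp 0 (by omega)
  have hF0 := hF 0 (by omega)
  have hF1 := hF 1 hℓ
  have hM : 0 ≤ M := by rw [hM_def]; linarith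
  have hF1M : F 1 ≤ M := by rw [hM_def]; linarith
  -- nonnegativity of η on [1, ℓ]
  have hηnn : ∀ j, 1 ≤ j → j ≤ ℓ → 0 ≤ η j := by
    intro j
    induction j with
    | zero => omega
    | succ n ih =>
      intro _ hjl
      rcases Nat.eq_zero_or_pos n with h | h
      · subst h; exact hη1
      · exact le_trans (ih (by omega) (by omega)) (hηmono n h hjl)
  -- partial sums of η are ≤ C₁
  have hηpartial : ∀ n, n ≤ ℓ → ∑ j ∈ Finset.Icc 1 n, η j ≤ C₁ := by
    intro n hn
    refine le_trans ?_ hηsum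
    apply Finset.sum_le_sum_of_subset_of_nonneg (Finset.Icc_subset_Icc_right hn)
    intro k hk _
    exact hηnn k (Finset.mem_Icc.mp hk).1 (Finset.mem_Icc.mp hk).2
  -- the partial-sum function S
  set S : ℕ → ℝ := fun m => ∑ i ∈ Finset.Icc 1 m, F i with hS_def
  clear_value S
  have hS0 : S 0 = 0 := by simp [hS_def]
  have hSrec : ∀ n, S (n + 1) = S n + F (n + 1) := by
    intro n
    simp only [hS_def]
    exact Finset.sum_Icc_succ_top (by omega) F
  have hSmono : ∀ i j, i ≤ j → j ≤ ℓ → S i ≤ S j := by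
    intro i j hij hjl
    simp only [hS_def]
    apply Finset.sum_le_sum_of_subset_of_nonneg (Finset.Icc_subset_Icc_right hij)
    intro k hk _
    exact hF k (le_trans (Finset.mem_Icc.mp hk).2 hjl)
  have hSnn : ∀ j, j ≤ ℓ → 0 ≤ S j := by
    intro j hj
    rw [← hS0]; exact hSmono 0 j (by omega) hj
  have hFS0 : ∀ i, i ≤ ℓ → F i ≤ F 0 + S i := by
    intro i hi
    rcases Nat.eq_zero_or_pos i with h | h
    · subst h; rw [hS0]; simp
    · have : F i ≤ S i := by
        simp only [hS_def]
        exact Finset.single_le_sum (f := F)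
          (fun k hk => hF k (le_trans (Finset.mem_Icc.mp hk).2 hi))
          (Finset.mem_Icc.mpr ⟨h, le_refl i⟩)
      linarith
  -- bound on p in terms of S
  have pbound1 : ∀ j, j + 1 ≤ ℓ → p (j + 1) ≤ p 0 + C₀ * (F 0 + S j + S (j + 1)) := by
    intro j
    induction j with
    | zero =>
      intro h1
      have h := hrec1 0 h1
      have hmax : max (F 0) (F 1) ≤ F 0 + F 1 := max_le (by linarith) (by linarith)
      have hS1 : S 1 = F 1 := by rw [hSrec 0, hS0]; ring
      rw [hS1, hS0]
      nlinarith
    | succ n ih =>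
      intro h2
      have hn1 := ih (by omega)
      have h := hrec1 (n + 1) h2
      have hFn1 := hF (n + 1) (by omega)
      have hFn2 := hF (n + 2) (by omega)
      have hmax : max (F (n + 1)) (F (n + 2)) ≤ F (n + 1) + F (n + 2) :=
        max_le (by linarith) (by linarith)
      have e1 := hSrec (n + 1)
      have e2 := hSrec n
      nlinarith
  have pbound : ∀ i, i ≤ ℓ → p i ≤ p 0 + 2 * C₀ * (F 0 + S i) := by
    intro i hi
    rcases Nat.eq_zero_or_pos i with h | h
    · subst h; rw [hS0]; nlinarith
    · obtain ⟨j, rfl⟩ : ∃ j, i = j + 1 := ⟨i - 1, by omega⟩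
      have := pbound1 j hi
      have hmono := hSmono j (j + 1) (by omega) hi
      have := hSnn (j + 1) hi
      nlinarith
  -- summed recursion for S
  set c : ℝ := 2 * C₀ + 1 with hc_def
  clear_value c
  have hc1 : (1 : ℝ) ≤ c := by rw [hc_def]; linarith
  have claim2 : ∀ n, n + 1 ≤ ℓ →
      S (n + 1) ≤ F 1 + (1 / 2) * S n + ∑ j ∈ Finset.Icc 1 n, c * (η j * (M + S j)) := by
    intro n
    induction n with
    | zero =>
      intro _
      have hS1 : S 1 = F 1 := by rw [hSrec 0, hS0]; ring
      rw [hS1, hS0]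
      simp
    | succ n ih =>
      intro hn2
      simp only [show n + 1 + 1 = n + 2 from rfl] at *
      have ihh := ih (by omega)
      have hηn : 0 ≤ η (n + 1) := hηnn (n + 1) (by omega) (by omega)
      have h2 := hrec2 (n + 1) (by omega) (by omega)
      simp only [show n + 1 + 1 = n + 2 from rfl] at h2
      have hSn : 0 ≤ S n := hSnn n (by omega)
      have hSn1 : S n ≤ S (n + 1) := hSmono n (n + 1) (by omega) (by omega)
      -- bound the sup' terms
      have hsp : η (n + 1) * ((Finset.range (n + 1)).sup'
          (Finset.nonempty_range_iff.mpr (Nat.succ_ne_zero n)) p) ≤ η (n + 1) * (p 0 + 2 * C₀ * (F 0 + S n)) := by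
        apply mul_le_mul_of_nonneg_left _ hηn
        apply Finset.sup'_le
        intro i hi
        have hi' : i ≤ n := by
          have := Finset.mem_range.mp hi; omega
        have h3 := pbound i (by omega)
        have h4 := hSmono i n hi' (by omega)
        nlinarith
      have hsf : η (n + 1) * ((Finset.range (n + 1)).sup'
          (Finset.nonempty_range_iff.mpr (Nat.succ_ne_zero n)) F) ≤ η (n + 1) * (F 0 + S n) := by
        apply mul_le_mul_of_nonneg_left _ hηn
        apply Finset.sup'_le
        intro i hi
        have hi' : i ≤ n := by
          have := Finset.mem_range.mp hi; omega
        have h3 := hFS0 i (by omega)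
        have h4 := hSmono i n hi' (by omega)
        linarith
      have hKM : η (n + 1) * K + η (n + 1) * (p 0 + 2 * C₀ * (F 0 + S n)) + η (n + 1) * (F 0 + S n)
          ≤ c * (η (n + 1) * (M + S n)) := by
        have hb : K + (p 0 + 2 * C₀ * (F 0 + S n)) + (F 0 + S n) ≤ c * (M + S n) := by
          rw [hc_def, hM_def]; nlinarith
        calc η (n + 1) * K + η (n + 1) * (p 0 + 2 * C₀ * (F 0 + S n)) + η (n + 1) * (F 0 + S n)
            = η (n + 1) * (K + (p 0 + 2 * C₀ * (F 0 + S n)) + (F 0 + S n)) := by ring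
          _ ≤ η (n + 1) * (c * (M + S n)) := mul_le_mul_of_nonneg_left hb hηn
          _ = c * (η (n + 1) * (M + S n)) := by ring
      have hstep : F (n + 2) ≤ (1 / 2) * F (n + 1) + c * (η (n + 1) * (M + S n)) := by
        linarith [h2, hsp, hsf, hKM]
      have hsum1 : ∑ j ∈ Finset.Icc 1 (n + 1), c * (η j * (M + S j))
          = ∑ j ∈ Finset.Icc 1 n, c * (η j * (M + S j)) + c * (η (n + 1) * (M + S (n + 1))) :=
        Finset.sum_Icc_succ_top (by omega) _
      have hlast : c * (η (n + 1) * (M + S n)) ≤ c * (η (n + 1) * (M + S (n + 1))) := by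
        have : η (n + 1) * (M + S n) ≤ η (n + 1) * (M + S (n + 1)) :=
          mul_le_mul_of_nonneg_left (by linarith) hηn
        nlinarith
      have e1 := hSrec (n + 1)
      have e2 := hSrec n
      rw [hsum1]
      linarith
  -- the Grönwall-form inequality
  set a : ℝ := 2 + 2 * c * C₁ with ha_def
  clear_value a
  set b : ℝ := 2 * c with hb_def
  clear_value b
  have hb0 : (0 : ℝ) ≤ b := by rw [hb_def]; linarith
  have ha1 : (1 : ℝ) ≤ a := by rw [ha_def]; nlinarith
  have haM : 0 ≤ a * M := mul_nonneg (by linarith) hM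
  have hgron_hyp : ∀ m, 1 ≤ m → m ≤ ℓ →
      S m ≤ a * M + b * ∑ j ∈ Finset.Icc 1 (m - 1), η j * S j := by
    intro m h1 hm
    obtain ⟨n, rfl⟩ : ∃ n, m = n + 1 := ⟨m - 1, by omega⟩
    have hcl := claim2 n (by omega)
    have hsplit : ∑ j ∈ Finset.Icc 1 n, c * (η j * (M + S j))
        = c * M * (∑ j ∈ Finset.Icc 1 n, η j) + c * ∑ j ∈ Finset.Icc 1 n, η j * S j := by
      rw [Finset.mul_sum, Finset.mul_sum]
      rw [← Finset.sum_add_distrib]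
      exact Finset.sum_congr rfl fun j _ => by ring
    have hpar := hηpartial n (by omega)
    have hcM : 0 ≤ c * M := mul_nonneg (by linarith) hM
    have hSn1 : S n ≤ S (n + 1) := hSmono n (n + 1) (by omega) hm
    have hred : (n + 1 : ℕ) - 1 = n := by omega
    rw [hred]
    rw [hsplit] at hcl
    have : c * M * (∑ j ∈ Finset.Icc 1 n, η j) ≤ c * M * C₁ :=
      mul_le_mul_of_nonneg_left hpar hcM
    rw [ha_def, hb_def]
    linarith
  have hgron := aux_gronwall a b M hb0 haM ℓ S η hηnn (by rw [hS0]; exact haM) hgron_hyp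
  -- exponential bound on the product
  have hTexp : ∀ n, n ≤ ℓ → ∏ i ∈ Finset.Icc 1 n, (1 + b * η i) ≤ Real.exp (b * C₁) := by
    intro n hn
    have h1 : ∏ i ∈ Finset.Icc 1 n, (1 + b * η i) ≤ ∏ i ∈ Finset.Icc 1 n, Real.exp (b * η i) := by
      apply Finset.prod_le_prod
      · intro i hi
        have := hηnn i (Finset.mem_Icc.mp hi).1 (le_trans (Finset.mem_Icc.mp hi).2 hn)
        nlinarith
      · intro i hi
        have := Real.add_one_le_exp (b * η i)
        linarith
    have h2 : ∏ i ∈ Finset.Icc 1 n, Real.exp (b * η i) = Real.exp (∑ i ∈ Finset.Icc 1 n, b * η i) :=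
      (Real.exp_sum _ _).symm
    have h3 : ∑ i ∈ Finset.Icc 1 n, b * η i = b * ∑ i ∈ Finset.Icc 1 n, η i := by
      rw [Finset.mul_sum]
    have h4 : b * ∑ i ∈ Finset.Icc 1 n, η i ≤ b * C₁ :=
      mul_le_mul_of_nonneg_left (hηpartial n hn) hb0
    calc ∏ i ∈ Finset.Icc 1 n, (1 + b * η i) ≤ ∏ i ∈ Finset.Icc 1 n, Real.exp (b * η i) := h1
      _ = Real.exp (∑ i ∈ Finset.Icc 1 n, b * η i) := h2
      _ ≤ Real.exp (b * C₁) := by rw [h3]; exact Real.exp_le_exp.mpr h4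
  set E : ℝ := a * Real.exp (b * C₁) with hE_def
  clear_value E
  have hE0 : 0 < E := by
    rw [hE_def]; positivity
  have hSbound : ∀ m, m ≤ ℓ → S m ≤ E * M := by
    intro m hm
    have h1 := hgron m hm
    have h2 := hTexp (m - 1) (by omega)
    calc S m ≤ a * M * ∏ i ∈ Finset.Icc 1 (m - 1), (1 + b * η i) := h1
      _ ≤ a * M * Real.exp (b * C₁) := mul_le_mul_of_nonneg_left h2 haM
      _ = E * M := by rw [hE_def]; ring
  -- final bounds on p and F sups
  set Cp : ℝ := 1 + 2 * C₀ * (1 + E) with hCp_def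
  clear_value Cp
  have hCp0 : 0 < Cp := by rw [hCp_def]; nlinarith
  have hp0M : p 0 ≤ M := by rw [hM_def]; linarith
  have hF0M : F 0 ≤ M := by rw [hM_def]; linarith
  have pfinal : ∀ i, i ≤ ℓ → p i ≤ Cp * M := by
    intro i hi
    have h1 := pbound i hi
    have h2 := hSbound i hi
    rw [hCp_def]
    nlinarith
  have Gfinal : ∀ i, i ≤ ℓ → F i ≤ (1 + E) * M := by
    intro i hi
    have h1 := hFS0 i hi
    have h2 := hSbound i hi
    nlinarith
  set D : ℝ := 1 + Cp + 1 + E with hD_def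
  clear_value D
  have hD0 : 0 < D := by rw [hD_def]; nlinarith
  have Frec : ∀ j, 1 ≤ j → j + 1 ≤ ℓ → F (j + 1) ≤ (1 / 2) * F j + D * (η j * M) := by
    intro j hj hjl
    have hηj : 0 ≤ η j := hηnn j hj (by omega)
    have h2 := hrec2 j hj hjl
    have hne : j ≠ 0 := by omega
    have hsp : η j * ((Finset.range j).sup' (Finset.nonempty_range_iff.mpr hne) p)
        ≤ η j * (Cp * M) := by
      apply mul_le_mul_of_nonneg_left _ hηj
      apply Finset.sup'_le
      intro i hi
      exact pfinal i (by have := Finset.mem_range.mp hi; omega)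
    have hsf : η j * ((Finset.range j).sup' (Finset.nonempty_range_iff.mpr hne) F)
        ≤ η j * ((1 + E) * M) := by
      apply mul_le_mul_of_nonneg_left _ hηj
      apply Finset.sup'_le
      intro i hi
      exact Gfinal i (by have := Finset.mem_range.mp hi; omega)
    have hKM : η j * K ≤ η j * M := mul_le_mul_of_nonneg_left (by rw [hM_def]; linarith) hηj
    have : η j * M + η j * (Cp * M) + η j * ((1 + E) * M) = D * (η j * M) := by
      rw [hD_def]; ring
    linarith
  -- final pointwise decay bound for F
  have claim4 : ∀ j, 1 ≤ j → j ≤ ℓ → F j ≤ 2 * (1 / 2 : ℝ) ^ j * M + 2 * D * (η j * M) := by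
    intro j hj
    induction j, hj using Nat.le_induction with
    | base =>
      intro _
      have hη1M : 0 ≤ η 1 * M := mul_nonneg hη1 hM
      have : (1 / 2 : ℝ) ^ 1 = 1 / 2 := by norm_num
      rw [this]
      nlinarith
    | succ n hn ih =>
      intro hn1
      have ihh := ih (by omega)
      have hfr := Frec n hn hn1
      have hmono := hηmono n hn hn1
      have hηn : 0 ≤ η n := hηnn n hn (by omega)
      have hpow : (1 / 2 : ℝ) ^ (n + 1) = (1 / 2) * (1 / 2 : ℝ) ^ n := by
        rw [pow_succ]; ring
      have hDM : 0 ≤ 2 * D * M := by nlinarith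
      have : 2 * D * (η n * M) ≤ 2 * D * (η (n + 1) * M) := by nlinarith
      rw [hpow]
      linarith
  -- conclusion
  refine ⟨Cp + 2 + 2 * D, by nlinarith, ?_⟩
  intro j hj hjl
  constructor
  · have h1 := pfinal j hjl
    nlinarith
  · have h1 := claim4 j hj hjl
    have hηj : 0 ≤ η j := hηnn j hj hjl
    have hpow : (0 : ℝ) ≤ (1 / 2 : ℝ) ^ j := by positivity
    nlinarith [mul_nonneg hpow hM, mul_nonneg hηj hM]
end

section
/- Let $\{F_j\}$, $\{p_j\}$ be nonnegative sequences and $\{\eta_j\}$ nonnegative and nondecreasing, satisfying for each $j$ with $1 \le j \le \ell - 1$: $F_{j+1} \le (1/2)^j F_1 + 2\eta_{j+1}\max\{p_0,\dots,p_j\} + 2\eta_{j+1}\max\{F_0,\dots,F_j\}$. Suppose further that for $1 \le j \le i$ one has $F_j \le 2(1+2\eta_1)\cdots(1+2\eta_j)\{(2^{-j}+\eta_j)(F_0+F_1) + \eta_j\max\{p_0,\dots,p_{j-1}\}\}$. Then $F_{i+1} \le 2(1+2\eta_1)\cdots(1+2\eta_{i+1})\{(2^{-i-1}+\eta_{i+1})(F_0+F_1)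 + \eta_{i+1}\max\{p_0,\dots,p_i\}\}$, i.e., the bound propagates by induction. -/
private lemma one_le_prod_aux (t : Finset ℕ) (f : ℕ → ℝ) (hf : ∀ i ∈ t, 1 ≤ f i) :
    (1:ℝ) ≤ ∏ i ∈ t, f i := by
  calc (1:ℝ) = ∏ _i ∈ t, (1:ℝ) := by simp
    _ ≤ ∏ i ∈ t, f i :=
      Finset.prod_le_prod (fun k _ => zero_le_one) (fun k hk => hf k hk)

private lemma prod_mono_aux (s t : Finset ℕ) (f : ℕ → ℝ) (hst : s ⊆ t)
    (hf : ∀ i ∈ t, 1 ≤ f i) : ∏ i ∈ s, f i ≤ ∏ i ∈ t, f i := by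
  rw [← Finset.prod_sdiff hst]
  have h1 : (1:ℝ) ≤ ∏ i ∈ t \ s, f i :=
    one_le_prod_aux _ _ (fun i hi => hf i (Finset.mem_sdiff.mp hi).1)
  have h2 : (1:ℝ) ≤ ∏ i ∈ s, f i :=
    one_le_prod_aux _ _ (fun i hi => hf i (hst hi))
  nlinarith

set_option maxHeartbeats 1000000 in
/-- The induction step (M-L-9) in the proof of Lemma 3.1. -/
theorem stmt3 (ℓ i : ℕ) (F p η : ℕ → ℝ)
    (hF : ∀ j ≤ ℓ, 0 ≤ F j) (hp : ∀ j ≤ ℓ, 0 ≤ p j)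
    (hη0 : ∀ j, 0 ≤ η j) (hηmono : Monotone η)
    (hi : 1 ≤ i) (hiℓ : i + 1 ≤ ℓ)
    (hrec : ∀ j, ∀ hj : 1 ≤ j, j + 1 ≤ ℓ →
      F (j + 1) ≤ (1 / 2 : ℝ) ^ j * F 1
        + 2 * η (j + 1) *
          (Finset.range (j + 1)).sup' (Finset.nonempty_range_iff.mpr (by omega)) p
        + 2 * η (j + 1) *
          (Finset.range (j + 1)).sup' (Finset.nonempty_range_iff.mpr (by omega)) F)
    (hind : ∀ j, ∀ hj : 1 ≤ j, j ≤ i →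
      F j ≤ 2 * (∏ k ∈ Finset.Icc 1 j, (1 + 2 * η k)) *
        (((1 / 2 : ℝ) ^ j + η j) * (F 0 + F 1)
          + η j * (Finset.range j).sup' (Finset.nonempty_range_iff.mpr (by omega)) p)) :
    F (i + 1) ≤ 2 * (∏ k ∈ Finset.Icc 1 (i + 1), (1 + 2 * η k)) *
      (((1 / 2 : ℝ) ^ (i + 1) + η (i + 1)) * (F 0 + F 1)
        + η (i + 1) *
          (Finset.range (i + 1)).sup' (Finset.nonempty_range_iff.mpr (by omega)) p) := by
  have hne : (Finset.range (i + 1)).Nonempty := Finset.nonempty_range_iff.mpr (by omega)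
  set P : ℝ := ∏ k ∈ Finset.Icc 1 i, (1 + 2 * η k) with hP
  set Mp : ℝ := (Finset.range (i + 1)).sup' hne p with hMp
  set MF : ℝ := (Finset.range (i + 1)).sup' hne F with hMF
  -- each factor ≥ 1
  have hfac : ∀ k, (1 : ℝ) ≤ 1 + 2 * η k := by
    intro k; nlinarith [hη0 k]
  have hP1 : (1 : ℝ) ≤ P := by
    rw [hP]; exact one_le_prod_aux _ _ (fun k _ => hfac k)
  -- Mp ≥ 0, Mp ≥ sup' range j p for j ≤ i+1
  have hMp0 : 0 ≤ Mp := by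
    have := Finset.le_sup' p (Finset.self_mem_range_succ i)
    exact le_trans (hp i (by omega)) this
  have hF0 : 0 ≤ F 0 := hF 0 (by omega)
  have hF1 : 0 ≤ F 1 := hF 1 (by omega)
  have hη : 0 ≤ η (i + 1) := hη0 (i + 1)
  -- bound on MF
  set C : ℝ := 2 * P * ((1 / 2 + η (i + 1)) * (F 0 + F 1) + η (i + 1) * Mp) with hC
  have hMFC : MF ≤ C := by
    apply Finset.sup'_le
    intro j hj
    have hji : j ≤ i := by simpa [Nat.lt_succ_iff] using Finset.mem_range.mp hj
    rcases Nat.eq_zero_or_pos j with rfl | hj1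
    · -- F 0 ≤ C
      have : F 0 + F 1 ≤ C := by
        have h1 : (1:ℝ) ≤ 2 * P * (1/2 + η (i+1)) := by nlinarith
        nlinarith [mul_nonneg (mul_nonneg (by positivity : (0:ℝ) ≤ 2 * P) hη) hMp0]
      nlinarith
    · have hnej : (Finset.range j).Nonempty := Finset.nonempty_range_iff.mpr (by omega)
      have h1 := hind j hj1 hji
      have hPj : (∏ k ∈ Finset.Icc 1 j, (1 + 2 * η k)) ≤ P := by
        rw [hP]
        exact prod_mono_aux _ _ _ (Finset.Icc_subset_Icc_right hji) (fun k _ => hfac k)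
      have hPj0 : (0:ℝ) ≤ ∏ k ∈ Finset.Icc 1 j, (1 + 2 * η k) :=
        le_trans zero_le_one (one_le_prod_aux _ _ (fun k _ => hfac k))
      have hsupj : (Finset.range j).sup' hnej p ≤ Mp := by
        apply Finset.sup'_le
        intro a ha
        exact Finset.le_sup' p (Finset.mem_range.mpr (by
          have := Finset.mem_range.mp ha; omega))
      have hpow : ((1:ℝ)/2)^j ≤ 1/2 := by
        calc ((1:ℝ)/2)^j ≤ (1/2)^1 := by
              apply pow_le_pow_of_le_one (by norm_num) (by norm_num) hj1
          _ = 1/2 := by norm_num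
      have hηj : η j ≤ η (i + 1) := hηmono (by omega)
      have hηj0 : 0 ≤ η j := hη0 j
      have hsupj0 : 0 ≤ (Finset.range j).sup' hnej p := by
        have := Finset.le_sup' p (Finset.mem_range.mpr (show 0 < j by omega))
        exact le_trans (hp 0 (by omega)) this
      calc F j ≤ 2 * (∏ k ∈ Finset.Icc 1 j, (1 + 2 * η k)) *
            (((1 / 2 : ℝ) ^ j + η j) * (F 0 + F 1)
              + η j * (Finset.range j).sup' hnej p) := h1
        _ ≤ C := by
            have hb : ((1 / 2 : ℝ) ^ j + η j) * (F 0 + F 1)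
                + η j * (Finset.range j).sup' hnej p
                ≤ (1 / 2 + η (i + 1)) * (F 0 + F 1) + η (i + 1) * Mp := by
              have : η j * (Finset.range j).sup' hnej p ≤ η (i+1) * Mp :=
                mul_le_mul hηj hsupj hsupj0 hη
              nlinarith
            have hb0 : 0 ≤ (1 / 2 + η (i + 1)) * (F 0 + F 1) + η (i + 1) * Mp := by
              positivity
            have hlhs0 : 0 ≤ ((1 / 2 : ℝ) ^ j + η j) * (F 0 + F 1)
                + η j * (Finset.range j).sup' hnej p := by positivity
            have hPpos : (0:ℝ) ≤ P := by linarith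
            have := mul_le_mul hPj hb hlhs0 hPpos
            rw [hC]
            nlinarith [this]
  have hrec' := hrec i hi hiℓ
  have key : F (i + 1) ≤ (1 / 2 : ℝ) ^ i * F 1 + 2 * η (i + 1) * Mp + 2 * η (i + 1) * C := by
    calc F (i+1) ≤ (1 / 2 : ℝ) ^ i * F 1 + 2 * η (i + 1) * Mp + 2 * η (i + 1) * MF := hrec'
      _ ≤ _ := by nlinarith
  have hprod : (∏ k ∈ Finset.Icc 1 (i + 1), (1 + 2 * η k)) = P * (1 + 2 * η (i + 1)) := by
    rw [hP, ← Finset.prod_Icc_succ_top (by omega : 1 ≤ i + 1)]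
  rw [hprod]
  have hx0 : (0:ℝ) ≤ (1/2:ℝ)^i := by positivity
  have hpow' : ((1:ℝ)/2)^(i+1) = (1/2:ℝ)^i * (1/2) := by ring
  rw [hpow']
  rw [hC] at key
  nlinarith [mul_nonneg hη hMp0, mul_nonneg hx0 hF1,
    mul_le_mul_of_nonneg_left (show F 1 ≤ F 0 + F 1 by linarith) hx0,
    mul_nonneg (mul_nonneg hη hMp0) (by linarith : (0:ℝ) ≤ P - 1),
    mul_nonneg (mul_nonneg hx0 (by linarith : (0:ℝ) ≤ F 0 + F 1)) (by linarith : (0:ℝ) ≤ P - 1),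
    mul_nonneg (mul_nonneg (mul_nonneg hη hx0) (by linarith : (0:ℝ) ≤ F 0 + F 1)) (by linarith : (0:ℝ) ≤ P)]
end
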